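/- Let A and B be real matrices of the same dimensions. If A Bᵀ = 0 and Aᵀ B = 0, then ‖A + B‖_* = ‖A‖_* + ‖B‖_*, where ‖·‖_* denotes the nuclear (Schatten-1) norm, i.e. the sum of the singular values. -/

import Mathlib

open Matrix

noncomputable section

/-- The nuclear (Schatten-1) norm of a real matrix: the trace of `(MᴴM)^{1/2}`, i.e. the sum
of the singular values of `M`. -/
def nuclearNorm {m n : ℕ} (M : Matrix (Fin m) (Fin n) ℝ) : ℝ :=
  (let hA := Matrix.posSemidef_conjTranspose_mul_self M
   (hA.1.eigenvectorUnitary.1 * diagonal ((RCLike.ofReal : ℝ → ℝ) ∘ (√·) ∘ hA.1.eigenvalues) *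
      (star hA.1.eigenvectorUnitary : Matrix (Fin n) (Fin n) ℝ))).trace

def Matrix.PosSemidef.sqrt {k : ℕ} {P : Matrix (Fin k) (Fin k) ℝ} (hP : P.PosSemidef) :
    Matrix (Fin k) (Fin k) ℝ :=
  hP.1.eigenvectorUnitary.1 * diagonal ((RCLike.ofReal : ℝ → ℝ) ∘ (√·) ∘ hP.1.eigenvalues) *
      (star hP.1.eigenvectorUnitary : Matrix (Fin k) (Fin k) ℝ)

section
open scoped MatrixOrder

lemma Matrix.PosSemidef.sqrt_eq_cfc {k : ℕ} {P : Matrix (Fin k) (Fin k) ℝ}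
    (hP : P.PosSemidef) : hP.sqrt = CFC.sqrt P := by
  rw [CFC.sqrt_eq_cfc, cfc_nnreal_eq_real _ P, hP.1.cfc_eq]
  simp only [IsHermitian.cfc, Matrix.PosSemidef.sqrt]
  congr 3
  funext i
  simp [Real.coe_sqrt, Real.coe_toNNReal', max_eq_left (hP.eigenvalues_nonneg i)]

lemma Matrix.PosSemidef.posSemidef_sqrt {k : ℕ} {P : Matrix (Fin k) (Fin k) ℝ}
    (hP : P.PosSemidef) : hP.sqrt.PosSemidef := by
  rw [hP.sqrt_eq_cfc]
  exact (CFC.sqrt_nonneg P).posSemidef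

lemma Matrix.PosSemidef.sqrt_mul_self {k : ℕ} {P : Matrix (Fin k) (Fin k) ℝ}
    (hP : P.PosSemidef) : hP.sqrt * hP.sqrt = P := by
  rw [hP.sqrt_eq_cfc]
  exact CFC.sqrt_mul_sqrt_self P hP.nonneg

lemma Matrix.PosSemidef.eq_sqrt_of_sq_eq {k : ℕ} {A B : Matrix (Fin k) (Fin k) ℝ}
    (hA : A.PosSemidef) (hB : B.PosSemidef) (h : A ^ 2 = B) : A = hB.sqrt := by
  rw [hB.sqrt_eq_cfc, eq_comm, CFC.sqrt_eq_iff _ _ hB.nonneg hA.nonneg, ← h, sq]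

end

lemma sqrt_congr {k : ℕ} {P Q : Matrix (Fin k) (Fin k) ℝ} (h : P = Q)
    (hP : P.PosSemidef) (hQ : Q.PosSemidef) : hP.sqrt = hQ.sqrt := by
  subst h; rfl

lemma sqrt_mul_sqrt_eq_zero {k : ℕ} {P Q : Matrix (Fin k) (Fin k) ℝ}
    (hP : P.PosSemidef) (hQ : Q.PosSemidef) (hPQ : P * Q = 0) :
    hP.sqrt * hQ.sqrt = 0 := by
  have h1 : hP.sqrt * Q = 0 := by
    rw [← conjTranspose_mul_self_eq_zero]
    calc (hP.sqrt * Q)ᴴ * (hP.sqrt * Q)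
        = Qᴴ * (hP.sqrtᴴ * hP.sqrt) * Q := by
          rw [conjTranspose_mul]; simp only [Matrix.mul_assoc]
      _ = Qᴴ * (P * Q) := by
          rw [hP.posSemidef_sqrt.isHermitian, hP.sqrt_mul_self, mul_assoc]
      _ = 0 := by rw [hPQ, mul_zero]
  rw [← self_mul_conjTranspose_eq_zero]
  calc (hP.sqrt * hQ.sqrt) * (hP.sqrt * hQ.sqrt)ᴴ
      = hP.sqrt * (hQ.sqrt * hQ.sqrtᴴ) * hP.sqrtᴴ := by
        rw [conjTranspose_mul]; simp only [Matrix.mul_assoc]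
    _ = (hP.sqrt * Q) * hP.sqrtᴴ := by
        rw [hQ.posSemidef_sqrt.isHermitian, hQ.sqrt_mul_self, mul_assoc]
    _ = 0 := by rw [h1, zero_mul]

lemma sqrt_add_of_mul_eq_zero {k : ℕ} {P Q : Matrix (Fin k) (Fin k) ℝ}
    (hP : P.PosSemidef) (hQ : Q.PosSemidef) (hPQ : P * Q = 0) (hQP : Q * P = 0) :
    (hP.add hQ).sqrt = hP.sqrt + hQ.sqrt := by
  have h1 : hP.sqrt * hQ.sqrt = 0 := sqrt_mul_sqrt_eq_zero hP hQ hPQ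
  have h2 : hQ.sqrt * hP.sqrt = 0 := sqrt_mul_sqrt_eq_zero hQ hP hQP
  refine ((hP.posSemidef_sqrt.add hQ.posSemidef_sqrt).eq_sqrt_of_sq_eq (hP.add hQ) ?_).symm
  rw [pow_two, add_mul, mul_add, mul_add, h1, h2, hP.sqrt_mul_self, hQ.sqrt_mul_self]
  simp

/-- if `A Bᵀ = 0` and `Aᵀ B = 0` then the nuclear norm is additive:
`‖A + B‖_* = ‖A‖_* + ‖B‖_*`. -/
theorem nuclearNorm_add_of_orthogonal
    (m n : ℕ) (A B : Matrix (Fin m) (Fin n) ℝ)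
    (h₁ : A * Bᵀ = 0) (h₂ : Aᵀ * B = 0) :
    nuclearNorm (A + B) = nuclearNorm A + nuclearNorm B := by
  have hA := posSemidef_conjTranspose_mul_self A
  have hB := posSemidef_conjTranspose_mul_self B
  have hconj : ∀ (M : Matrix (Fin m) (Fin n) ℝ), Mᴴ = Mᵀ := fun M => by
    ext i j; simp [conjTranspose_apply]
  have hBA : B * Aᵀ = 0 := by
    have := congrArg Matrix.transpose h₁
    simpa [transpose_mul] using this
  have hPQ : (Aᴴ * A) * (Bᴴ * B) = 0 := by
    rw [hconj, hconj, Matrix.mul_assoc, ← Matrix.mul_assoc A, h₁, Matrix.zero_mul, Matrix.mul_zero]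
  have hQP : (Bᴴ * B) * (Aᴴ * A) = 0 := by
    rw [hconj, hconj, Matrix.mul_assoc, ← Matrix.mul_assoc B, hBA, Matrix.zero_mul, Matrix.mul_zero]
  have hsum : (A + B)ᴴ * (A + B) = (Aᴴ * A) + (Bᴴ * B) := by
    have hAB : Aᴴ * B = 0 := by rw [hconj]; exact h₂
    have hBA' : Bᴴ * A = 0 := by
      rw [hconj]
      have := congrArg Matrix.transpose h₂
      simpa [transpose_mul] using this
    rw [conjTranspose_add, Matrix.add_mul, Matrix.mul_add, Matrix.mul_add, hAB, hBA']
    abel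
  unfold nuclearNorm
  change (posSemidef_conjTranspose_mul_self (A + B)).sqrt.trace =
    (posSemidef_conjTranspose_mul_self A).sqrt.trace +
      (posSemidef_conjTranspose_mul_self B).sqrt.trace
  rw [sqrt_congr hsum (posSemidef_conjTranspose_mul_self (A + B)) (hA.add hB),
    sqrt_add_of_mul_eq_zero hA hB hPQ hQP, trace_add]
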